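/- Let {T(t)}_{t≥0} be a C₀-semigroup on a Hilbert space H and m a positive integer. If there exist 0 < t₁ < t₂ such that T(t) is an m-isometry for every t ∈ [t₁, t₂], then T(t) is an m-isometry for every t ≥ 0. -/
import Mathlib

open Finset Polynomial

noncomputable section StmtAux

/-- shift operator on real sequences -/
def stmt5Sh : (ℕ → ℝ) →ₗ[ℝ] (ℕ → ℝ) where
  toFun a := fun b => a (b + 1)
  map_add' := by intros; rfl
  map_smul' := by intros; rfl

lemma stmt5Sh_pow (j : ℕ) (a : ℕ → ℝ) (b : ℕ) : ((stmt5Sh ^ j) a) b = a (b + j) := by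
  induction j generalizing a b with
  | zero => rfl
  | succ n ih =>
      rw [pow_succ, Module.End.mul_apply, ih]
      rfl

lemma stmt5_expand (r mm : ℕ) (a : ℕ → ℝ) (b : ℕ) :
    ((Polynomial.aeval stmt5Sh ((X ^ r - 1 : ℝ[X]) ^ mm)) a) b
      = ∑ k ∈ range (mm + 1), (-1 : ℝ) ^ (mm - k) * (mm.choose k) * a (b + k * r) := by
  have hpoly : ((X : ℝ[X]) ^ r - 1) ^ mm
      = ∑ k ∈ range (mm + 1), ((-1 : ℝ) ^ (mm - k) * (mm.choose k)) • X ^ (k * r) := by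
    rw [sub_eq_add_neg, add_pow]
    refine Finset.sum_congr rfl fun k hk => ?_
    rw [← pow_mul, mul_comm r k]
    rw [smul_eq_C_mul]
    simp only [map_mul, map_pow, map_natCast, map_neg, map_one]
    ring
  rw [hpoly, map_sum]
  simp only [map_smul, map_pow, aeval_X]
  rw [LinearMap.sum_apply]
  simp only [LinearMap.smul_apply]
  rw [Finset.sum_apply]
  refine Finset.sum_congr rfl fun k hk => ?_
  simp [stmt5Sh_pow, mul_assoc]

lemma stmt5_key (a : ℕ → ℝ) (m r : ℕ) (hr : 0 < r)
    (h1 : ∀ b, ∑ k ∈ range (m + 1), (-1 : ℝ) ^ (m - k) * (m.choose k) * a (b + k * r) = 0)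
    (h2 : ∀ b, ∑ k ∈ range (m + 1), (-1 : ℝ) ^ (m - k) * (m.choose k) * a (b + k * (r + 1)) = 0)
    (n b : ℕ) :
    ∑ k ∈ range (m + 1), (-1 : ℝ) ^ (m - k) * (m.choose k) * a (b + k * n) = 0 := by
  have H1 : (Polynomial.aeval stmt5Sh (((X : ℝ[X]) ^ r - 1) ^ m)) a = 0 :=
    funext fun b => by rw [stmt5_expand]; exact h1 b
  have H2 : (Polynomial.aeval stmt5Sh (((X : ℝ[X]) ^ (r + 1) - 1) ^ m)) a = 0 :=
    funext fun b => by rw [stmt5_expand]; exact h2 b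
  -- coprimality of geometric sums
  obtain ⟨r', rfl⟩ : ∃ r', r = r' + 1 := ⟨r - 1, (Nat.succ_pred_eq_of_pos hr).symm⟩
  have hx : IsCoprime (X : ℝ[X]) (∑ i ∈ range (r' + 1), X ^ i) := by
    rw [geom_sum_succ]
    have : IsCoprime (X : ℝ[X]) 1 := isCoprime_one_right
    have := this.add_mul_left_right (∑ i ∈ range r', X ^ i)
    rwa [add_comm] at this
  have hAB : IsCoprime (∑ i ∈ range (r' + 1), (X : ℝ[X]) ^ i)
      (∑ i ∈ range (r' + 1 + 1), (X : ℝ[X]) ^ i) := by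
    rw [geom_sum_succ' (x := (X : ℝ[X])) (n := r' + 1)]
    have hpow : IsCoprime (∑ i ∈ range (r' + 1), (X : ℝ[X]) ^ i) ((X : ℝ[X]) ^ (r' + 1)) :=
      hx.symm.pow_right
    simpa using hpow.add_mul_left_right 1
  obtain ⟨u, v, huv⟩ := (hAB.pow (n := m) (m := m))
  set r := r' + 1
  have hfacA : ((X : ℝ[X]) ^ r - 1) ^ m
      = (∑ i ∈ range r, (X : ℝ[X]) ^ i) ^ m * ((X : ℝ[X]) - 1) ^ m := by
    rw [← mul_pow, geom_sum_mul]
  have hfacB : ((X : ℝ[X]) ^ (r + 1) - 1) ^ m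
      = (∑ i ∈ range (r + 1), (X : ℝ[X]) ^ i) ^ m * ((X : ℝ[X]) - 1) ^ m := by
    rw [← mul_pow, geom_sum_mul]
  have hfac : ((X : ℝ[X]) - 1) ^ m
      = u * ((X : ℝ[X]) ^ r - 1) ^ m + v * ((X : ℝ[X]) ^ (r + 1) - 1) ^ m := by
    rw [hfacA, hfacB]
    calc ((X : ℝ[X]) - 1) ^ m
        = (u * (∑ i ∈ range r, (X : ℝ[X]) ^ i) ^ m
            + v * (∑ i ∈ range (r + 1), (X : ℝ[X]) ^ i) ^ m) * ((X : ℝ[X]) - 1) ^ m := by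
          rw [huv, one_mul]
      _ = _ := by ring
  have H3 : (Polynomial.aeval stmt5Sh (((X : ℝ[X]) - 1) ^ m)) a = 0 := by
    rw [hfac, map_add, map_mul, map_mul, LinearMap.add_apply, Module.End.mul_apply,
      Module.End.mul_apply, H1, H2, map_zero, map_zero, add_zero]
  have H4 : (Polynomial.aeval stmt5Sh (((X : ℝ[X]) ^ n - 1) ^ m)) a = 0 := by
    have hfacn : ((X : ℝ[X]) ^ n - 1) ^ m
        = (∑ i ∈ range n, (X : ℝ[X]) ^ i) ^ m * ((X : ℝ[X]) - 1) ^ m := by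
      rw [← mul_pow, geom_sum_mul]
    rw [hfacn, map_mul, Module.End.mul_apply, H3, map_zero]
  have := congrFun H4 b
  rwa [stmt5_expand] at this

end StmtAux

theorem stmt_5 {H : Type*} [NormedAddCommGroup H] [InnerProductSpace ℂ H] [CompleteSpace H]
    (T : ℝ → H →L[ℂ] H) (m : ℕ) (hm : 0 < m)
    (hT0 : T 0 = 1)
    (hTsem : ∀ s t : ℝ, 0 ≤ s → 0 ≤ t → T (s + t) = T t ∘L T s)
    (hTcont : ∀ x : H, Filter.Tendsto (fun t => T t x) (nhdsWithin 0 (Set.Ioi 0)) (nhds x))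
    (t₁ t₂ : ℝ) (ht₁ : 0 < t₁) (ht₁₂ : t₁ < t₂)
    (hiso : ∀ t ∈ Set.Icc t₁ t₂, ∀ x : H, ∑ k ∈ range (m + 1),
      ((-1 : ℝ)) ^ (m - k) * (m.choose k) * ‖((T t) ^ k) x‖ ^ 2 = 0) :
    ∀ t : ℝ, 0 ≤ t → ∀ x : H, ∑ k ∈ range (m + 1),
      ((-1 : ℝ)) ^ (m - k) * (m.choose k) * ‖((T t) ^ k) x‖ ^ 2 = 0 := by
  -- powers of the semigroup
  have hpow : ∀ u : ℝ, 0 ≤ u → ∀ k : ℕ, (T u) ^ k = T (k * u) := by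
    intro u hu k
    induction k with
    | zero => simp [hT0]
    | succ k ih =>
        rw [pow_succ, ih]
        have h := hTsem u ((k : ℝ) * u) hu (by positivity)
        rw [show ((k + 1 : ℕ) : ℝ) * u = u + (k : ℝ) * u by push_cast; ring, h]
        rfl
  intro t ht x
  rcases eq_or_lt_of_le ht with h0 | hpos
  · -- t = 0 case
    rw [← h0]
    simp only [hT0, one_pow, ContinuousLinearMap.one_apply]
    rw [← Finset.sum_mul]
    have hz : ∑ k ∈ range (m + 1), (-1 : ℝ) ^ (m - k) * (m.choose k) = 0 := by
      have hInt := Int.alternating_sum_range_choose (n := m)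
      rw [if_neg hm.ne'] at hInt
      have : ∑ k ∈ range (m + 1), (-1 : ℝ) ^ (m - k) * (m.choose k)
          = (-1 : ℝ) ^ m * ∑ k ∈ range (m + 1), (-1 : ℝ) ^ k * (m.choose k) := by
        rw [Finset.mul_sum]
        refine Finset.sum_congr rfl fun k hk => ?_
        have hk' : k ≤ m := Nat.lt_succ_iff.mp (Finset.mem_range.mp hk)
        have hsign : (-1 : ℝ) ^ m * (-1 : ℝ) ^ k = (-1 : ℝ) ^ (m - k) := by
          rw [← pow_add, show m + k = (m - k) + 2 * k by omega, pow_add, pow_mul]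
          norm_num
        rw [← mul_assoc, hsign]
      rw [this]
      have : ∑ k ∈ range (m + 1), (-1 : ℝ) ^ k * (m.choose k) = 0 := by
        have := congrArg (Int.cast : ℤ → ℝ) hInt
        push_cast at this
        convert this using 1
      rw [this, mul_zero]
    rw [hz, zero_mul]
  · -- t > 0 case
    have hd : (0 : ℝ) < (t₂ - t₁) / 2 := by linarith
    obtain ⟨n, hn⟩ := exists_nat_gt (t / ((t₂ - t₁) / 2))
    have hn0 : 0 < n := by
      have : (0 : ℝ) < t / ((t₂ - t₁) / 2) := by positivity
      exact_mod_cast Nat.pos_of_ne_zero fun h => by simp [h] at hn; linarith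
    set s := t / n with hsdef
    have hs : 0 < s := by positivity
    have hnn : (0 : ℝ) < n := by exact_mod_cast hn0
    have hslt : s < (t₂ - t₁) / 2 := by
      rw [hsdef, div_lt_iff₀ hnn]
      have := (div_lt_iff₀ hd).mp hn
      nlinarith
    have hsle : 2 * s ≤ t₂ - t₁ := by linarith
    set r := ⌈t₁ / s⌉₊ with hrdef
    have hr : 0 < r := Nat.one_le_ceil_iff.mpr (by positivity)
    have hrs1 : t₁ ≤ r * s := by
      have := Nat.le_ceil (t₁ / s)
      calc t₁ = (t₁ / s) * s := by field_simp
        _ ≤ r * s := by nlinarith [this]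
    have hrsub : (r : ℝ) < t₁ / s + 1 := Nat.ceil_lt_add_one (by positivity)
    have hrs2 : ((r : ℝ) + 1) * s ≤ t₂ := by
      have h1 : ((r : ℝ) + 1) * s < (t₁ / s + 2) * s := by nlinarith
      have h2 : (t₁ / s + 2) * s = t₁ + 2 * s := by field_simp
      linarith
    have hrs2' : (r : ℝ) * s ≤ t₂ := by nlinarith
    -- the sequence
    set a : ℕ → ℝ := fun j => ‖T ((j : ℝ) * s) x‖ ^ 2 with hadef
    have hstep : ∀ ρ : ℕ, t₁ ≤ (ρ : ℝ) * s → (ρ : ℝ) * s ≤ t₂ →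
        ∀ b : ℕ, ∑ k ∈ range (m + 1), (-1 : ℝ) ^ (m - k) * (m.choose k) * a (b + k * ρ) = 0 := by
      intro ρ hρ1 hρ2 b
      have hρs : (0 : ℝ) ≤ (ρ : ℝ) * s := by positivity
      have hbs : (0 : ℝ) ≤ (b : ℝ) * s := by positivity
      refine Eq.trans ?_ (hiso ((ρ : ℝ) * s) ⟨hρ1, hρ2⟩ (T ((b : ℝ) * s) x))
      refine Finset.sum_congr rfl fun k hk => ?_
      refine congrArg (fun z => (-1 : ℝ) ^ (m - k) * (m.choose k) * z) ?_
      have hcomp := hTsem ((b : ℝ) * s) ((k : ℝ) * ((ρ : ℝ) * s)) hbs (by positivity)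
      have harg : ((b + k * ρ : ℕ) : ℝ) * s = (b : ℝ) * s + (k : ℝ) * ((ρ : ℝ) * s) := by
        push_cast; ring
      calc a (b + k * ρ) = ‖T ((b : ℝ) * s + (k : ℝ) * ((ρ : ℝ) * s)) x‖ ^ 2 := by
            rw [show a (b + k * ρ) = ‖T (((b + k * ρ : ℕ) : ℝ) * s) x‖ ^ 2 from rfl, harg]
        _ = ‖((T ((ρ : ℝ) * s)) ^ k) (T ((b : ℝ) * s) x)‖ ^ 2 := by
            rw [hpow ((ρ : ℝ) * s) hρs k, hcomp]; rfl
    have h1 := hstep r hrs1 hrs2'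
    have h2 := hstep (r + 1) (by push_cast; nlinarith) (by exact_mod_cast hrs2)
    have hkey := stmt5_key a m r hr h1 h2 n 0
    have hts : ((n : ℝ)) * s = t := by
      rw [mul_comm]
      exact div_mul_cancel₀ t hnn.ne'
    refine Eq.trans ?_ hkey
    refine Finset.sum_congr rfl fun k hk => ?_
    refine congrArg (fun z => (-1 : ℝ) ^ (m - k) * (m.choose k) * z) ?_
    have harg : ((0 + k * n : ℕ) : ℝ) * s = (k : ℝ) * t := by
      push_cast
      rw [← hts]
      ring
    rw [hpow t ht k, show a (0 + k * n) = ‖T (((0 + k * n : ℕ) : ℝ) * s) x‖ ^ 2 from rfl, harg]
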